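/- arXiv:1303.4464 — 3 statements merged into one kernel-verified Lean document; each statement's English description precedes it below -/
import Mathlib

section
/- The congruence lattice of any lattice is a distributive lattice. -/
set_option linter.unusedVariables false

/-- A congruence of a lattice: an equivalence relation compatible with `⊔` and `⊓`. -/
structure LatticeCon' (L : Type*) [Lattice L] where
  r : L → L → Prop
  refl : ∀ a, r a a
  symm : ∀ {a b}, r a b → r b a
  trans : ∀ {a b c}, r a b → r b c → r a c
  sup_comp : ∀ {a b c d}, r a b → r c d → r (a ⊔ c) (b ⊔ d)
  inf_comp : ∀ {a b c d}, r a b → r c d → r (a ⊓ c) (b ⊓ d)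

namespace LatticeCon'

variable {L : Type*} [Lattice L]

theorem ext' : ∀ {θ φ : LatticeCon' L}, θ.r = φ.r → θ = φ := by
  rintro ⟨r, _, _, _, _, _⟩ ⟨r', _, _, _, _, _⟩ rfl; rfl

/-- Congruences ordered by inclusion (refinement). -/
instance : PartialOrder (LatticeCon' L) where
  le θ φ := ∀ a b, θ.r a b → φ.r a b
  le_refl θ a b h := h
  le_trans θ φ ψ h1 h2 a b h := h2 a b (h1 a b h)
  le_antisymm θ φ h1 h2 := ext' (by funext a b; exact propext ⟨h1 a b, h2 a b⟩)

/-- The lattice of congruences: meet is intersection, join is the congruence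
generated by the union. -/
instance : Lattice (LatticeCon' L) :=
  { (inferInstance : PartialOrder (LatticeCon' L)) with
    inf := fun θ φ =>
      ⟨fun a b => θ.r a b ∧ φ.r a b,
        fun a => ⟨θ.refl a, φ.refl a⟩,
        fun h => ⟨θ.symm h.1, φ.symm h.2⟩,
        fun h h' => ⟨θ.trans h.1 h'.1, φ.trans h.2 h'.2⟩,
        fun h h' => ⟨θ.sup_comp h.1 h'.1, φ.sup_comp h.2 h'.2⟩,
        fun h h' => ⟨θ.inf_comp h.1 h'.1, φ.inf_comp h.2 h'.2⟩⟩
    inf_le_left := fun θ φ a b h => h.1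
    inf_le_right := fun θ φ a b h => h.2
    le_inf := fun θ φ ψ h1 h2 a b h => ⟨h1 a b h, h2 a b h⟩
    sup := fun θ φ =>
      ⟨fun a b => ∀ ψ : LatticeCon' L, θ ≤ ψ → φ ≤ ψ → ψ.r a b,
        fun a ψ _ _ => ψ.refl a,
        fun h ψ h1 h2 => ψ.symm (h ψ h1 h2),
        fun h h' ψ h1 h2 => ψ.trans (h ψ h1 h2) (h' ψ h1 h2),
        fun h h' ψ h1 h2 => ψ.sup_comp (h ψ h1 h2) (h' ψ h1 h2),
        fun h h' ψ h1 h2 => ψ.inf_comp (h ψ h1 h2) (h' ψ h1 h2)⟩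
    le_sup_left := fun θ φ a b h ψ h1 _ => h1 a b h
    le_sup_right := fun θ φ a b h ψ _ h2 => h2 a b h
    sup_le := fun θ φ ψ h1 h2 a b h => h ψ h1 h2 }

/-- Arbitrary intersections of congruences. -/
instance : InfSet (LatticeCon' L) where
  sInf S :=
    ⟨fun a b => ∀ θ ∈ S, θ.r a b,
      fun a θ _ => θ.refl a,
      fun h θ hθ => θ.symm (h θ hθ),
      fun h h' θ hθ => θ.trans (h θ hθ) (h' θ hθ),
      fun h h' θ hθ => θ.sup_comp (h θ hθ) (h' θ hθ),
      fun h h' θ hθ => θ.inf_comp (h θ hθ) (h' θ hθ)⟩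

/-- The principal congruence generated by a pair `(a, b)`. -/
noncomputable def conGen (a b : L) : LatticeCon' L :=
  sInf {θ : LatticeCon' L | θ.r a b}

/-- Chains alternating between two congruences. -/
inductive Chain (φ ψ : LatticeCon' L) : L → L → Prop
  | refl (a : L) : Chain φ ψ a a
  | stepφ {a b c : L} : φ.r a b → Chain φ ψ b c → Chain φ ψ a c
  | stepψ {a b c : L} : ψ.r a b → Chain φ ψ b c → Chain φ ψ a c

namespace Chain

variable {φ ψ : LatticeCon' L}

theorem trans' {a b c : L} (h : Chain φ ψ a b) (h' : Chain φ ψ b c) :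
    Chain φ ψ a c := by
  induction h with
  | refl => exact h'
  | stepφ h _ ih => exact .stepφ h (ih h')
  | stepψ h _ ih => exact .stepψ h (ih h')

theorem symm' {a b : L} (h : Chain φ ψ a b) : Chain φ ψ b a := by
  induction h with
  | refl => exact .refl _
  | stepφ h _ ih => exact ih.trans' (.stepφ (φ.symm h) (.refl _))
  | stepψ h _ ih => exact ih.trans' (.stepψ (ψ.symm h) (.refl _))

theorem sup_left {a b : L} (c : L) (h : Chain φ ψ a b) :
    Chain φ ψ (a ⊔ c) (b ⊔ c) := by
  induction h with
  | refl => exact .refl _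
  | stepφ h _ ih => exact .stepφ (φ.sup_comp h (φ.refl c)) ih
  | stepψ h _ ih => exact .stepψ (ψ.sup_comp h (ψ.refl c)) ih

theorem inf_left {a b : L} (c : L) (h : Chain φ ψ a b) :
    Chain φ ψ (a ⊓ c) (b ⊓ c) := by
  induction h with
  | refl => exact .refl _
  | stepφ h _ ih => exact .stepφ (φ.inf_comp h (φ.refl c)) ih
  | stepψ h _ ih => exact .stepψ (ψ.inf_comp h (ψ.refl c)) ih

theorem sup_right {a b : L} (c : L) (h : Chain φ ψ a b) :
    Chain φ ψ (c ⊔ a) (c ⊔ b) := by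
  rw [sup_comm c a, sup_comm c b]; exact h.sup_left c

theorem inf_right {a b : L} (c : L) (h : Chain φ ψ a b) :
    Chain φ ψ (c ⊓ a) (c ⊓ b) := by
  rw [inf_comm c a, inf_comm c b]; exact h.inf_left c

end Chain

/-- The chain closure as a congruence: this realizes the join of two
congruences concretely. -/
def chainCon (φ ψ : LatticeCon' L) : LatticeCon' L where
  r := Chain φ ψ
  refl := .refl
  symm := Chain.symm'
  trans := Chain.trans'
  sup_comp h h' := ((h.sup_left _).trans' (h'.sup_right _))
  inf_comp h h' := ((h.inf_left _).trans' (h'.inf_right _))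

end LatticeCon'
/-- The congruence lattice of any lattice is distributive. -/
theorem conLat_distrib (L : Type*) [Lattice L] (θ φ ψ : LatticeCon' L) :
    θ ⊓ (φ ⊔ ψ) = (θ ⊓ φ) ⊔ (θ ⊓ ψ) := by
  refine le_antisymm ?_ le_inf_sup
  intro a b hab
  obtain ⟨hθ, hsup⟩ := hab
  -- extract a chain witnessing `(φ ⊔ ψ).r a b`
  have hchain : LatticeCon'.Chain φ ψ a b :=
    hsup (LatticeCon'.chainCon φ ψ)
      (fun x y h => .stepφ h (.refl _)) (fun x y h => .stepψ h (.refl _))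
  set p := a ⊓ b with hp
  set q := a ⊔ b with hq
  -- θ relates p and q
  have hpq : θ.r p q := by
    have h1 : θ.r (a ⊓ b) (b ⊓ b) := θ.inf_comp hθ (θ.refl b)
    have h2 : θ.r (a ⊔ b) (b ⊔ b) := θ.sup_comp hθ (θ.refl b)
    rw [inf_idem] at h1; rw [sup_idem] at h2
    exact θ.trans h1 (θ.symm h2)
  set m : L → L := fun x => (x ⊔ p) ⊓ q with hm
  -- θ relates p to every m x
  have hθm : ∀ x : L, θ.r p (m x) := by
    intro x
    have h1 : θ.r (m x ⊓ p) (m x ⊓ q) := θ.inf_comp (θ.refl (m x)) hpq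
    have hpm : p ≤ m x := le_inf (le_sup_right.trans le_rfl) (inf_le_left.trans le_sup_left)
    have hmq : m x ≤ q := inf_le_right
    rw [inf_eq_right.mpr hpm, inf_eq_left.mpr hmq] at h1
    exact h1
  have hθmm : ∀ x y : L, θ.r (m x) (m y) := fun x y =>
    θ.trans (θ.symm (hθm x)) (hθm y)
  set τ := (θ ⊓ φ) ⊔ (θ ⊓ ψ) with hτ
  have hτφ : ∀ x y : L, θ.r x y → φ.r x y → τ.r x y := fun x y h1 h2 =>
    (le_sup_left : θ ⊓ φ ≤ τ) x y ⟨h1, h2⟩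
  have hτψ : ∀ x y : L, θ.r x y → ψ.r x y → τ.r x y := fun x y h1 h2 =>
    (le_sup_right : θ ⊓ ψ ≤ τ) x y ⟨h1, h2⟩
  -- main induction along the chain
  have key : ∀ x y : L, LatticeCon'.Chain φ ψ x y → τ.r (m x) (m y) := by
    intro x y h
    induction h with
    | refl => exact τ.refl _
    | stepφ h _ ih =>
      exact τ.trans (hτφ _ _ (hθmm _ _) (φ.inf_comp (φ.sup_comp h (φ.refl p)) (φ.refl q))) ih
    | stepψ h _ ih =>
      exact τ.trans (hτψ _ _ (hθmm _ _) (ψ.inf_comp (ψ.sup_comp h (ψ.refl p)) (ψ.refl q))) ih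
  have hma : m a = a := by
    simp only [hm, hp, hq]
    rw [sup_inf_self, inf_eq_left.mpr le_sup_left]
  have hmb : m b = b := by
    simp only [hm, hp, hq]
    rw [sup_eq_left.mpr inf_le_right, inf_eq_left.mpr le_sup_right]
  have := key a b hchain
  rwa [hma, hmb] at this
end

section
/- In a finite semimodular lattice, all maximal chains between two fixed elements have the same length (Jordan–Hölder chain condition). -/
set_option linter.unusedSectionVars false

section JHaux

variable {L : Type*} [Lattice L] [Finite L]

/-- There is a maximal (covering) chain of length `n` from `x` to `y`. -/
private def MC (x y : L) (n : ℕ) : Prop :=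
  ∃ c : Fin (n + 1) → L, c 0 = x ∧ c (Fin.last n) = y ∧
    ∀ i : Fin n, c i.castSucc ⋖ c i.succ

private lemma MC.strictMono {n : ℕ} {c : Fin (n + 1) → L}
    (h : ∀ i : Fin n, c i.castSucc ⋖ c i.succ) : StrictMono c :=
  Fin.strictMono_iff_lt_succ.mpr fun i => (h i).lt

private lemma MC.le {x y : L} {n : ℕ} (h : MC x y n) : x ≤ y := by
  obtain ⟨c, h0, hl, hcov⟩ := h
  have := (MC.strictMono hcov).monotone (Fin.zero_le (Fin.last n))
  rwa [h0, hl] at this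

private lemma MC.lt {x y : L} {n : ℕ} (h : MC x y (n + 1)) : x < y := by
  obtain ⟨c, h0, hl, hcov⟩ := h
  have h01 : (0 : Fin (n + 2)) < Fin.last (n + 1) := by
    simp [Fin.lt_iff_val_lt_val]
  have := (MC.strictMono hcov) h01
  rwa [h0, hl] at this

private lemma MC.refl (x : L) : MC x x 0 :=
  ⟨fun _ => x, rfl, rfl, fun i => i.elim0⟩

private lemma MC.cons {x y z : L} {n : ℕ} (hzx : z ⋖ x) (h : MC x y n) :
    MC z y (n + 1) := by
  obtain ⟨c, h0, hl, hcov⟩ := h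
  refine ⟨Fin.cons z c, Fin.cons_zero _ _, ?_, ?_⟩
  · have hlast : Fin.last (n + 1) = (Fin.last n).succ := rfl
    rw [hlast, Fin.cons_succ]; exact hl
  · intro i
    refine Fin.cases ?_ ?_ i
    · simpa [Fin.cons_succ, Fin.cons_zero, h0] using hzx
    · intro j
      have e : (j.succ).castSucc = (j.castSucc).succ := (Fin.succ_castSucc j).symm
      rw [e, Fin.cons_succ, Fin.cons_succ]
      exact hcov j

private lemma MC.tail {x y : L} {n : ℕ} (h : MC x y (n + 1)) :
    ∃ a : L, x ⋖ a ∧ MC a y n := by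
  obtain ⟨c, h0, hl, hcov⟩ := h
  refine ⟨c 1, ?_, fun i => c i.succ, rfl, ?_, ?_⟩
  · have := hcov 0
    simpa [h0] using this
  · rw [← hl]; rfl
  · intro i
    have := hcov i.succ
    rwa [← Fin.succ_castSucc] at this

/-- In a finite lattice, any `z ≤ y` can be joined by a maximal chain. -/
private lemma exists_MC {y : L} :
    ∀ N (z : L), z ≤ y → (Set.Icc z y).ncard ≤ N → ∃ t, MC z y t := by
  intro N
  induction N with
  | zero =>
      intro z hzy hcard
      exfalso
      have hpos : 0 < (Set.Icc z y).ncard := by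
        refine Set.Nonempty.ncard_pos ?_ ?_
        · exact Set.toFinite _
        · exact ⟨z, Set.mem_Icc.mpr ⟨le_refl z, hzy⟩⟩
      omega
  | succ N ih =>
      intro z hzy hcard
      rcases eq_or_lt_of_le hzy with rfl | hlt
      · exact ⟨0, MC.refl z⟩
      · -- pick a minimal element of {w | z < w ∧ w ≤ y}
        have hS : ({w : L | z < w ∧ w ≤ y}).Finite := Set.toFinite _
        obtain ⟨w, hwmem, hwmin'⟩ := hS.exists_minimal ⟨y, hlt, le_refl y⟩
        have hwmin : ∀ u ∈ {w' : L | z < w' ∧ w' ≤ y}, u ≤ w → w = u :=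
          fun u hu h => le_antisymm (hwmin' hu h) h
        obtain ⟨hzw, hwy⟩ := hwmem
        have hcov : z ⋖ w := by
          refine ⟨hzw, fun u hzu huw => ?_⟩
          have hu : u ∈ {w : L | z < w ∧ w ≤ y} := ⟨hzu, huw.le.trans hwy⟩
          have := hwmin u hu huw.le
          exact absurd this.symm huw.ne
        have hsub : Set.Icc w y ⊂ Set.Icc z y := by
          constructor
          · intro a ha
            exact Set.mem_Icc.mpr ⟨hzw.le.trans (Set.mem_Icc.mp ha).1,
              (Set.mem_Icc.mp ha).2⟩
          · intro hcon
            have : z ∈ Set.Icc w y := hcon (Set.mem_Icc.mpr ⟨le_refl z, hzy⟩)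
            exact absurd (Set.mem_Icc.mp this).1 (hzw : z < w).not_ge
        have hlt' : (Set.Icc w y).ncard < (Set.Icc z y).ncard :=
          Set.ncard_lt_ncard hsub (Set.toFinite _)
        obtain ⟨t, ht⟩ := ih w hwy (by omega)
        exact ⟨t + 1, MC.cons hcov ht⟩

/-- Jordan–Hölder, lengths of maximal chains agree, for the `MC` predicate. -/
private lemma MC_unique (hsm : ∀ a b : L, a ⊓ b ⋖ a → b ⋖ a ⊔ b) :
    ∀ k, ∀ m (x y : L), MC x y k → MC x y m → k = m := by
  intro k
  induction k using Nat.strong_induction_on with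
  | _ k ih =>
    intro m x y hk hm
    match k, m with
    | 0, 0 => rfl
    | 0, m + 1 =>
        obtain ⟨c, h0, hl, _⟩ := hk
        have hxy : x = y := by rw [← h0, ← hl]; rfl
        exact absurd hxy (MC.lt hm).ne
    | k + 1, 0 =>
        obtain ⟨d, h0, hl, _⟩ := hm
        have hxy : x = y := by rw [← h0, ← hl]; rfl
        exact absurd hxy (MC.lt hk).ne
    | k + 1, m + 1 =>
        obtain ⟨a, hxa, hk'⟩ := MC.tail hk
        obtain ⟨b, hxb, hm'⟩ := MC.tail hm
        by_cases hab : a = b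
        · subst hab
          have := ih k (Nat.lt_succ_self k) m a y hk' hm'
          omega
        · -- a ⊓ b = x
          have hxab : x ≤ a ⊓ b := le_inf hxa.lt.le hxb.lt.le
          have hinf : a ⊓ b = x := by
            by_contra hne
            have h1 : x < a ⊓ b := lt_of_le_of_ne hxab (Ne.symm hne)
            have h2 : a ⊓ b < a := by
              rcases lt_or_eq_of_le (inf_le_left : a ⊓ b ≤ a) with h | h
              · exact h
              · exfalso
                have hab' : a ≤ b := by
                  rw [← h]; exact inf_le_right
                rcases lt_or_eq_of_le hab' with h' | h'
                · exact hxb.2 hxa.lt h'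
                · exact hab h'
            exact hxa.2 h1 h2
          have hb' : b ⋖ a ⊔ b := hsm a b (by rw [hinf]; exact hxa)
          have ha' : a ⋖ a ⊔ b := by
            have := hsm b a (by rw [inf_comm]; rw [hinf]; exact hxb)
            rwa [sup_comm] at this
          have hzy : a ⊔ b ≤ y := sup_le hk'.le hm'.le
          obtain ⟨t, ht⟩ := exists_MC (Set.Icc (a ⊔ b) y).ncard (a ⊔ b) hzy le_rfl
          have hka : k = t + 1 :=
            ih k (Nat.lt_succ_self k) (t + 1) a y hk' (MC.cons ha' ht)
          have hmb : t + 1 = m :=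
            ih (t + 1) (by omega) m b y (MC.cons hb' ht) hm'
          omega

end JHaux

set_option linter.unusedVariables false
/-- Jordan–Hölder chain condition: in a finite semimodular lattice, all maximal
chains between two fixed elements have the same length. -/
theorem jordan_holder_semimodular (L : Type*) [Lattice L] [Finite L]
    (hsm : ∀ a b : L, a ⊓ b ⋖ a → b ⋖ a ⊔ b)
    (x y : L) (k m : ℕ) (c : Fin (k + 1) → L) (d : Fin (m + 1) → L)
    (hc0 : c 0 = x) (hck : c (Fin.last k) = y)
    (hd0 : d 0 = x) (hdm : d (Fin.last m) = y)
    (hc : ∀ i : Fin k, c i.castSucc ⋖ c i.succ)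
    (hd : ∀ i : Fin m, d i.castSucc ⋖ d i.succ) :
    k = m :=
  MC_unique hsm k m x y ⟨c, hc0, hck, hc⟩ ⟨d, hd0, hdm, hd⟩
end

section
/- The join-irreducible elements of the congruence lattice of a finite lattice L are exactly the congruences of the form con(p, q) for prime intervals p ⋖ q of L. -/
set_option linter.unusedVariables false

/-- A congruence of a lattice: an equivalence relation compatible with `⊔` and `⊓`. -/
structure LatticeCong (L : Type*) [Lattice L] where
  r : L → L → Prop
  refl : ∀ a, r a a
  symm : ∀ {a b}, r a b → r b a
  trans : ∀ {a b c}, r a b → r b c → r a c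
  sup_comp : ∀ {a b c d}, r a b → r c d → r (a ⊔ c) (b ⊔ d)
  inf_comp : ∀ {a b c d}, r a b → r c d → r (a ⊓ c) (b ⊓ d)

namespace LatticeCong

variable {L : Type*} [Lattice L]

theorem ext' : ∀ {θ φ : LatticeCong L}, θ.r = φ.r → θ = φ := by
  rintro ⟨r, _, _, _, _, _⟩ ⟨r', _, _, _, _, _⟩ rfl; rfl

/-- Congruences ordered by inclusion (refinement). -/
instance : PartialOrder (LatticeCong L) where
  le θ φ := ∀ a b, θ.r a b → φ.r a b
  le_refl θ a b h := h
  le_trans θ φ ψ h1 h2 a b h := h2 a b (h1 a b h)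
  le_antisymm θ φ h1 h2 := ext' (by funext a b; exact propext ⟨h1 a b, h2 a b⟩)

/-- The lattice of congruences: meet is intersection, join is the congruence
generated by the union. -/
instance : Lattice (LatticeCong L) :=
  { (inferInstance : PartialOrder (LatticeCong L)) with
    inf := fun θ φ =>
      ⟨fun a b => θ.r a b ∧ φ.r a b,
        fun a => ⟨θ.refl a, φ.refl a⟩,
        fun h => ⟨θ.symm h.1, φ.symm h.2⟩,
        fun h h' => ⟨θ.trans h.1 h'.1, φ.trans h.2 h'.2⟩,
        fun h h' => ⟨θ.sup_comp h.1 h'.1, φ.sup_comp h.2 h'.2⟩,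
        fun h h' => ⟨θ.inf_comp h.1 h'.1, φ.inf_comp h.2 h'.2⟩⟩
    inf_le_left := fun θ φ a b h => h.1
    inf_le_right := fun θ φ a b h => h.2
    le_inf := fun θ φ ψ h1 h2 a b h => ⟨h1 a b h, h2 a b h⟩
    sup := fun θ φ =>
      ⟨fun a b => ∀ ψ : LatticeCong L, θ ≤ ψ → φ ≤ ψ → ψ.r a b,
        fun a ψ _ _ => ψ.refl a,
        fun h ψ h1 h2 => ψ.symm (h ψ h1 h2),
        fun h h' ψ h1 h2 => ψ.trans (h ψ h1 h2) (h' ψ h1 h2),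
        fun h h' ψ h1 h2 => ψ.sup_comp (h ψ h1 h2) (h' ψ h1 h2),
        fun h h' ψ h1 h2 => ψ.inf_comp (h ψ h1 h2) (h' ψ h1 h2)⟩
    le_sup_left := fun θ φ a b h ψ h1 _ => h1 a b h
    le_sup_right := fun θ φ a b h ψ _ h2 => h2 a b h
    sup_le := fun θ φ ψ h1 h2 a b h => h ψ h1 h2 }

/-- Arbitrary intersections of congruences. -/
instance : InfSet (LatticeCong L) where
  sInf S :=
    ⟨fun a b => ∀ θ ∈ S, θ.r a b,
      fun a θ _ => θ.refl a,
      fun h θ hθ => θ.symm (h θ hθ),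
      fun h h' θ hθ => θ.trans (h θ hθ) (h' θ hθ),
      fun h h' θ hθ => θ.sup_comp (h θ hθ) (h' θ hθ),
      fun h h' θ hθ => θ.inf_comp (h θ hθ) (h' θ hθ)⟩

/-- The principal congruence generated by a pair `(a, b)`. -/
noncomputable def conGen (a b : L) : LatticeCong L :=
  sInf {θ : LatticeCong L | θ.r a b}

end LatticeCong

namespace LatticeCong

variable {L : Type*} [Lattice L]

theorem le_def {θ φ : LatticeCong L} (h : θ ≤ φ) : ∀ a b, θ.r a b → φ.r a b := h

/-- The diagonal (equality) congruence. -/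
def diag : LatticeCong L :=
  ⟨Eq, fun _ => rfl, Eq.symm, Eq.trans,
    fun h h' => by rw [h, h'], fun h h' => by rw [h, h']⟩

theorem diag_le (θ : LatticeCong L) : (diag : LatticeCong L) ≤ θ :=
  fun a b h => h ▸ θ.refl a

theorem conGen_r (a b : L) : (conGen a b).r a b := fun _ hθ => hθ

theorem conGen_le {θ : LatticeCong L} {a b : L} (h : θ.r a b) : conGen a b ≤ θ :=
  fun _ _ hxy => hxy θ h

/-- The base relation for the join of two congruences. -/
def JR (α β : LatticeCong L) (x y : L) : Prop := α.r x y ∨ β.r x y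

theorem rtg_sup_right (α β : LatticeCong L) {a b : L} (c : L)
    (h : Relation.ReflTransGen (JR α β) a b) :
    Relation.ReflTransGen (JR α β) (a ⊔ c) (b ⊔ c) := by
  induction h with
  | refl => exact .refl
  | tail _ hstep ih =>
    exact ih.tail (hstep.elim (fun h => Or.inl (α.sup_comp h (α.refl c)))
      (fun h => Or.inr (β.sup_comp h (β.refl c))))

theorem rtg_inf_right (α β : LatticeCong L) {a b : L} (c : L)
    (h : Relation.ReflTransGen (JR α β) a b) :
    Relation.ReflTransGen (JR α β) (a ⊓ c) (b ⊓ c) := by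
  induction h with
  | refl => exact .refl
  | tail _ hstep ih =>
    exact ih.tail (hstep.elim (fun h => Or.inl (α.inf_comp h (α.refl c)))
      (fun h => Or.inr (β.inf_comp h (β.refl c))))

/-- The join of two congruences, described as a reflexive-transitive closure. -/
def joinCon (α β : LatticeCong L) : LatticeCong L where
  r := Relation.ReflTransGen (JR α β)
  refl _ := .refl
  symm h := by
    haveI : Std.Symm (JR α β) :=
      ⟨fun _ _ h => h.elim (fun h => Or.inl (α.symm h)) (fun h => Or.inr (β.symm h))⟩
    exact Std.Symm.symm _ _ h
  trans h h' := h.trans h'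
  sup_comp {a b c d} h h' := by
    refine (rtg_sup_right α β c h).trans ?_
    rw [sup_comm b c, sup_comm b d]
    exact rtg_sup_right α β b h'
  inf_comp {a b c d} h h' := by
    refine (rtg_inf_right α β c h).trans ?_
    rw [inf_comm b c, inf_comm b d]
    exact rtg_inf_right α β b h'

theorem sup_r_iff {α β : LatticeCong L} {a b : L} :
    (α ⊔ β).r a b ↔ Relation.ReflTransGen (JR α β) a b := by
  constructor
  · intro h
    exact h (joinCon α β) (fun x y hxy => Relation.ReflTransGen.single (Or.inl hxy))
      (fun x y hxy => Relation.ReflTransGen.single (Or.inr hxy))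
  · intro h
    intro ψ h1 h2
    induction h with
    | refl => exact ψ.refl a
    | tail _ hstep ih =>
      exact ψ.trans ih (hstep.elim (fun h => h1 _ _ h) (fun h => h2 _ _ h))

/-- A prime interval collapsed by a join of two congruences is collapsed by one of them. -/
theorem cover_sup {α β : LatticeCong L} {p q : L} (hpq : p ⋖ q) (h : (α ⊔ β).r p q) :
    α.r p q ∨ β.r p q := by
  rw [sup_r_iff] at h
  set π : L → L := fun x => (x ⊔ p) ⊓ q with hπ
  have hπmem : ∀ x : L, π x = p ∨ π x = q := by
    intro x
    exact hpq.eq_or_eq (le_inf le_sup_right hpq.le) inf_le_right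
  have key : ∀ {x y : L}, Relation.ReflTransGen (JR α β) x y →
      π x = π y ∨ (α.r p q ∨ β.r p q) := by
    intro x y h
    induction h with
    | refl => exact Or.inl rfl
    | @tail u v _ hstep ih =>
      have hstep' : α.r (π u) (π v) ∨ β.r (π u) (π v) :=
        hstep.elim (fun h => Or.inl (α.inf_comp (α.sup_comp h (α.refl p)) (α.refl q)))
          (fun h => Or.inr (β.inf_comp (β.sup_comp h (β.refl p)) (β.refl q)))
      rcases ih with heq | hdone
      · rcases hπmem u with hu | hu <;> rcases hπmem v with hv | hv
        · exact Or.inl (heq.trans (hu.trans hv.symm))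
        · rw [hu, hv] at hstep'; exact Or.inr hstep'
        · rw [hu, hv] at hstep'
          exact Or.inr (hstep'.elim (fun h => Or.inl (α.symm h)) (fun h => Or.inr (β.symm h)))
        · exact Or.inl (heq.trans (hu.trans hv.symm))
      · exact Or.inr hdone
  rcases key h with heq | hdone
  · exfalso
    apply hpq.ne
    have hp : π p = p := by simp [hπ, inf_eq_left.2 hpq.le]
    have hq : π q = q := by simp [hπ, sup_eq_left.2 hpq.le]
    rw [hp, hq] at heq
    exact heq
  · exact hdone

end LatticeCong

theorem supIrred_finset_sup' {α : Type*} [SemilatticeSup α] {ι : Type*} {a : α}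
    (ha : SupIrred a) :
    ∀ (s : Finset ι) (hs : s.Nonempty) (f : ι → α), s.sup' hs f = a → ∃ i ∈ s, f i = a := by
  intro s
  induction s using Finset.cons_induction with
  | empty => intro hs; simp at hs
  | cons j t hj ih =>
    intro hs f hsup
    rcases t.eq_empty_or_nonempty with rfl | ht
    · exact ⟨j, by simp, by simpa using hsup⟩
    · rw [Finset.sup'_cons ht] at hsup
      rcases ha.2 hsup with h | h
      · exact ⟨j, Finset.mem_cons_self _ _, h⟩
      · obtain ⟨i, hi, hfi⟩ := ih ht f h
        exact ⟨i, Finset.mem_cons_of_mem hi, hfi⟩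

/-- The join-irreducible congruences of a finite lattice are exactly the principal
congruences of prime intervals. -/
theorem conLat_supIrred_iff (L : Type*) [Lattice L] [Finite L] (θ : LatticeCong L) :
    SupIrred θ ↔ ∃ p q : L, p ⋖ q ∧ θ = LatticeCong.conGen p q := by
  constructor
  · intro ha
    -- the congruence lattice is finite
    have hfin : Finite (LatticeCong L) :=
      Finite.of_injective (fun φ : LatticeCong L => φ.r) (fun _ _ h => LatticeCong.ext' h)
    -- θ collapses some nontrivial pair
    have hne : ∃ a b : L, θ.r a b ∧ a ≠ b := by
      by_contra hcon
      push_neg at hcon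
      apply ha.1
      have hθdiag : θ = LatticeCong.diag := by
        apply le_antisymm
        · intro a b h
          exact hcon a b h
        · exact LatticeCong.diag_le θ
      intro φ hφ
      rw [hθdiag]
      exact LatticeCong.diag_le φ
    obtain ⟨a, b, hab, hne⟩ := hne
    -- the set of principal congruences of prime intervals collapsed by θ
    set S : Set (LatticeCong L) :=
      {φ | ∃ p q : L, p ⋖ q ∧ θ.r p q ∧ φ = LatticeCong.conGen p q} with hS
    have hSfin : S.Finite := Set.toFinite S
    set F : Finset (LatticeCong L) := hSfin.toFinset with hF
    -- F is nonempty
    have hmb : θ.r (a ⊓ b) (a ⊔ b) := by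
      have h1 : θ.r (a ⊓ b) b := by
        have := θ.inf_comp hab (θ.refl b); rwa [inf_idem] at this
      have h2 : θ.r b (a ⊔ b) := by
        have := θ.sup_comp (θ.refl b) (θ.symm hab)
        rw [sup_idem] at this
        rwa [sup_comm b a] at this
      exact θ.trans h1 h2
    have hlt : a ⊓ b < a ⊔ b := inf_lt_sup.2 hne
    obtain ⟨c, hc, hcle⟩ := exists_covBy_le_of_lt hlt
    have hθc : θ.r (a ⊓ b) c := by
      have := θ.inf_comp hmb (θ.refl c)
      rwa [inf_eq_left.2 hc.le, inf_eq_right.2 hcle] at this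
    have hmem0 : LatticeCong.conGen (a ⊓ b) c ∈ F := by
      rw [hF, Set.Finite.mem_toFinset]
      exact ⟨a ⊓ b, c, hc, hθc, rfl⟩
    have hFne : F.Nonempty := ⟨_, hmem0⟩
    -- θ is below the join of F
    have main : ∀ x y : L, x ≤ y → θ.r x y → (F.sup' hFne id).r x y := by
      have wf : WellFounded ((· > ·) : L → L → Prop) := wellFounded_gt
      intro x
      induction x using wf.induction with
      | _ x ih =>
        intro y hxy hr
        rcases eq_or_lt_of_le hxy with rfl | hlt
        · exact (F.sup' hFne id).refl x
        · obtain ⟨c, hxc, hcy⟩ := exists_covBy_le_of_lt hlt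
          have h1 : θ.r x c := by
            have := θ.inf_comp hr (θ.refl c)
            rwa [inf_eq_left.2 hxc.le, inf_eq_right.2 hcy] at this
          have hmem : LatticeCong.conGen x c ∈ F := by
            rw [hF, Set.Finite.mem_toFinset]
            exact ⟨x, c, hxc, h1, rfl⟩
          have h2 : (F.sup' hFne id).r x c :=
            LatticeCong.le_def (Finset.le_sup' id hmem) x c (LatticeCong.conGen_r x c)
          have h3 : θ.r c y := by
            have := θ.sup_comp hr (θ.refl c)
            rwa [sup_eq_right.2 hxc.le, sup_eq_left.2 hcy] at this
          exact (F.sup' hFne id).trans h2 (ih c hxc.lt y hcy h3)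
    have hle : θ ≤ F.sup' hFne id := by
      intro x y h
      have h1 : θ.r (x ⊓ y) x := by
        have := θ.inf_comp (θ.refl x) (θ.symm h); rwa [inf_idem] at this
      have h2 : θ.r (x ⊓ y) y := by
        have := θ.inf_comp h (θ.refl y); rwa [inf_idem] at this
      exact (F.sup' hFne id).trans ((F.sup' hFne id).symm (main _ _ inf_le_left h1))
        (main _ _ inf_le_right h2)
    have hge : F.sup' hFne id ≤ θ := by
      apply Finset.sup'_le
      intro φ hφ
      rw [hF, Set.Finite.mem_toFinset] at hφ
      obtain ⟨p, q, hpq, hθpq, rfl⟩ := hφ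
      exact LatticeCong.conGen_le hθpq
    have heq : F.sup' hFne id = θ := le_antisymm hge hle
    obtain ⟨φ, hφ, hφeq⟩ := supIrred_finset_sup' ha F hFne id heq
    rw [hF, Set.Finite.mem_toFinset] at hφ
    obtain ⟨p, q, hpq, hθpq, rfl⟩ := hφ
    exact ⟨p, q, hpq, hφeq.symm⟩
  · rintro ⟨p, q, hpq, rfl⟩
    constructor
    · intro h
      exact hpq.ne (LatticeCong.le_def (h (LatticeCong.diag_le _)) p q (LatticeCong.conGen_r p q))
    · intro α β hsup
      have hpq' : (α ⊔ β).r p q := by rw [hsup]; exact LatticeCong.conGen_r p q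
      rcases LatticeCong.cover_sup hpq hpq' with h | h
      · exact Or.inl (le_antisymm (hsup ▸ le_sup_left) (LatticeCong.conGen_le h))
      · exact Or.inr (le_antisymm (hsup ▸ le_sup_right) (LatticeCong.conGen_le h))
end
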